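/- Let K be a field that is complete with respect to a nontrivial discrete additive valuation v_K : K → ℝ ∪ {∞} (so v_K(K×) is a nonzero discrete subgroup of ℝ), and let V be a finite-dimensional K-vector space. Let v and v' be two v_K-valuations on V, i.e. maps V → ℝ ∪ {∞} satisfying v(x+y) ≥ min(v(x), v(y)), v(c•x) = v_K(c) + v(x) for all c ∈ K, and v(x) = ∞ if and only if x = 0 (and likewise for v'). Then there exists a basis (x₀,…,x_n) of V that simultaneously diagonalizes v and v': for all scalars a₀,…,a_n ∈ K, v(∑_i a_i·x_i) = min_i (v_K(a_i) + v(x_i)) and v'(∑_i a_i·x_i) = min_i (v_K(a_i) + v'(x_i)). -/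

import Mathlib

open Module Submodule Set

universe u v

/-! ### Auxiliary EReal lemmas -/

lemma ereal_exists_real {x : EReal} (h1 : x ≠ ⊤) (h2 : x ≠ ⊥) : ∃ r : ℝ, x = (r : EReal) := by
  induction x with
  | bot => exact absurd rfl h2
  | coe r => exact ⟨r, rfl⟩
  | top => exact absurd rfl h1

lemma ereal_eq_top_of_forall {x : EReal} (h : ∀ M : ℝ, (M : EReal) ≤ x) : x = ⊤ := by
  induction x with
  | bot => exact absurd (h 0) (by simp)
  | coe r =>
    have := h (r + 1)
    rw [EReal.coe_le_coe_iff] at this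
    linarith
  | top => rfl

lemma ereal_le_cancel_right {a b : EReal} {r : ℝ} (h : a + (r : EReal) ≤ b + (r : EReal)) :
    a ≤ b := by
  by_contra hc
  push_neg at hc
  exact absurd h (EReal.add_lt_add_right_coe hc r).not_ge

lemma ereal_lt_cancel_right {a b : EReal} {r : ℝ} (h : a + (r : EReal) < b + (r : EReal)) :
    a < b := by
  by_contra hc
  push_neg at hc
  exact absurd (add_le_add_left hc (r : EReal)) h.not_ge

lemma ereal_min_add_right (a b : EReal) (c : EReal) :
    min (a + c) (b + c) = min a b + c := by
  rcases le_total a b with h | h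
  · rw [min_eq_left h, min_eq_left (add_le_add_left h c)]
  · rw [min_eq_right h, min_eq_right (add_le_add_left h c)]

lemma exists_iInf_eq {ι : Type*} [Finite ι] [Nonempty ι] (f : ι → EReal) :
    ∃ i, (⨅ j, f j) = f i := by
  obtain ⟨i, hi⟩ := Finite.exists_min f
  exact ⟨i, le_antisymm (iInf_le f i) (le_iInf hi)⟩

lemma iInf_fin_succ {n : ℕ} (f : Fin (n + 1) → EReal) :
    (⨅ i, f i) = min (f 0) (⨅ j : Fin n, f j.succ) := by
  apply le_antisymm
  · exact le_min (iInf_le f 0) (le_iInf fun j => iInf_le f j.succ)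
  · refine le_iInf fun i => ?_
    induction i using Fin.cases with
    | zero => exact min_le_left _ _
    | succ j => exact (min_le_right _ _).trans (iInf_le _ j)

/-- The discrete-maximum lemma: a nonempty set of reals, bounded above, all of whose
non-maximal elements lie in finitely many cosets of `cℤ`, has a maximum. -/
lemma disc_max {ι : Type*} [Finite ι] {c : ℝ} (hc : 0 < c) (t : ι → ℝ) (S : Set ℝ)
    (hne : S.Nonempty) (hbdd : BddAbove S)
    (hcoset : ∀ r ∈ S, (∃ r' ∈ S, r < r') → ∃ i, ∃ k : ℤ, r = t i + k * c) :
    ∃ r ∈ S, ∀ r' ∈ S, r' ≤ r := by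
  by_contra hmax
  push_neg at hmax
  set δ := sSup S with hδ
  have hlt : ∀ r ∈ S, r < δ := fun r hr => by
    obtain ⟨r', hr', h⟩ := hmax r hr
    exact lt_of_lt_of_le h (le_csSup hbdd hr')
  have key : S ∩ Set.Ioo (δ - c / 2) δ ⊆
      Set.range (fun i => t i + (⌊(δ - t i) / c⌋ : ℝ) * c) := by
    rintro r ⟨hrS, hr1, hr2⟩
    obtain ⟨i, k, hk⟩ := hcoset r hrS (hmax r hrS)
    refine ⟨i, ?_⟩
    have hkf : ⌊(δ - t i) / c⌋ = k := by
      rw [Int.floor_eq_iff]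
      constructor
      · rw [le_div_iff₀ hc]; nlinarith [hk ▸ hr2.le]
      · rw [div_lt_iff₀ hc]; push_cast; nlinarith [hk ▸ hr1]
    show t i + (⌊(δ - t i) / c⌋ : ℝ) * c = r
    rw [hkf]
    exact hk.symm
  have hfin : (S ∩ Set.Ioo (δ - c / 2) δ).Finite := (Set.finite_range _).subset key
  have hne2 : (S ∩ Set.Ioo (δ - c / 2) δ).Nonempty := by
    obtain ⟨r, hrS, hr⟩ := exists_lt_of_lt_csSup hne (show δ - c / 2 < δ by linarith)
    exact ⟨r, hrS, hr, hlt r hrS⟩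
  obtain ⟨rs, hrsmem, hrsmax⟩ := Set.Finite.exists_maximalFor id _ hfin hne2
  obtain ⟨r', hr'S, hgt⟩ := hmax rs hrsmem.1
  have hr'mem : r' ∈ S ∩ Set.Ioo (δ - c / 2) δ :=
    ⟨hr'S, lt_trans hrsmem.2.1 hgt, hlt r' hr'S⟩
  exact absurd (hrsmax hr'mem hgt.le) (not_le.mpr hgt)
/-! ### Bundled valuations -/

structure FieldVal (K : Type u) [Field K] where
  v : K → EReal
  htop : ∀ a, v a = ⊤ ↔ a = 0
  hbot : ∀ a, v a ≠ ⊥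
  hmul : ∀ a b, v (a * b) = v a + v b
  hadd : ∀ a b, min (v a) (v b) ≤ v (a + b)
  c : ℝ
  hc : 0 < c
  hdisc : ∀ a, a ≠ 0 → ∃ k : ℤ, v a = (((k : ℝ) * c : ℝ) : EReal)
  hcompl : ∀ a : ℕ → K,
      (∀ M : ℝ, ∃ N : ℕ, ∀ m ≥ N, ∀ n ≥ N, (M : EReal) ≤ v (a m - a n)) →
      ∃ l : K, ∀ M : ℝ, ∃ N : ℕ, ∀ n ≥ N, (M : EReal) ≤ v (a n - l)

structure ModVal {K : Type u} [Field K] (w : FieldVal K) (V : Type v) [AddCommGroup V]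
    [Module K V] where
  v : V → EReal
  hadd : ∀ x y, min (v x) (v y) ≤ v (x + y)
  hsmul : ∀ (c : K) (x : V), v (c • x) = w.v c + v x
  htop : ∀ x, v x = ⊤ ↔ x = 0

variable {K : Type u} [Field K] {w : FieldVal K}

namespace FieldVal

lemma hzero (w : FieldVal K) : w.v 0 = ⊤ := (w.htop 0).2 rfl

lemma real (w : FieldVal K) {a : K} (h : a ≠ 0) : ∃ r : ℝ, w.v a = (r : EReal) :=
  ereal_exists_real (fun ht => h ((w.htop a).1 ht)) (w.hbot a)

lemma one (w : FieldVal K) : w.v 1 = 0 := by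
  obtain ⟨r, hr⟩ := w.real (one_ne_zero (α := K))
  have h := w.hmul 1 1
  rw [one_mul, hr, ← EReal.coe_add] at h
  have : r = r + r := EReal.coe_eq_coe_iff.mp h
  have hr0 : r = 0 := by linarith
  rw [hr, hr0, EReal.coe_zero]

lemma negone (w : FieldVal K) : w.v (-1) = 0 := by
  obtain ⟨r, hr⟩ := w.real (neg_ne_zero.mpr (one_ne_zero (α := K)))
  have h := w.hmul (-1) (-1)
  rw [neg_mul_neg, one_mul, w.one, hr, ← EReal.coe_add] at h
  have : (0 : ℝ) = r + r := EReal.coe_eq_coe_iff.mp h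
  have hr0 : r = 0 := by linarith
  rw [hr, hr0, EReal.coe_zero]

lemma neg (w : FieldVal K) (a : K) : w.v (-a) = w.v a := by
  have : -a = -1 * a := by ring
  rw [this, w.hmul, w.negone, zero_add]

lemma hsub (w : FieldVal K) (a b : K) : min (w.v a) (w.v b) ≤ w.v (a - b) := by
  have := w.hadd a (-b)
  rwa [w.neg b, ← sub_eq_add_neg] at this

/-- ultrametric equality for the field valuation -/
lemma ueq (w : FieldVal K) {a b : K} (h : w.v b < w.v a) : w.v (a + b) = w.v b := by
  apply le_antisymm
  · by_contra hcon
    push_neg at hcon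
    have h1 := w.hsub (a + b) a
    rw [add_sub_cancel_left] at h1
    exact absurd h1 (not_le.mpr (lt_min hcon h))
  · have := w.hadd a b
    rwa [min_eq_right h.le] at this

end FieldVal

namespace ModVal

variable {V : Type v} [AddCommGroup V] [Module K V]

lemma hzero (vv : ModVal w V) : vv.v 0 = ⊤ := (vv.htop 0).2 rfl

lemma nebot (vv : ModVal w V) (x : V) : vv.v x ≠ ⊥ := by
  intro hb
  have h := vv.hsmul 0 x
  rw [zero_smul, vv.hzero, hb, EReal.add_bot] at h
  exact bot_ne_top h.symm

lemma real (vv : ModVal w V) {x : V} (h : x ≠ 0) : ∃ r : ℝ, vv.v x = (r : EReal) :=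
  ereal_exists_real (fun ht => h ((vv.htop x).1 ht)) (vv.nebot x)

lemma vneg (vv : ModVal w V) (x : V) : vv.v (-x) = vv.v x := by
  have : -x = (-1 : K) • x := by simp
  rw [this, vv.hsmul, w.negone, zero_add]

lemma hsub (vv : ModVal w V) (x y : V) : min (vv.v x) (vv.v y) ≤ vv.v (x - y) := by
  have := vv.hadd x (-y)
  rwa [vv.vneg y, ← sub_eq_add_neg] at this

lemma ueq (vv : ModVal w V) {x y : V} (h : vv.v y < vv.v x) : vv.v (x + y) = vv.v y := by
  apply le_antisymm
  · by_contra hcon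
    push_neg at hcon
    have h1 := vv.hsub (x + y) x
    rw [add_sub_cancel_left] at h1
    exact absurd h1 (not_le.mpr (lt_min hcon h))
  · have := vv.hadd x y
    rwa [min_eq_right h.le] at this

/-- ultrametric: distinct values give the min -/
lemma umin (vv : ModVal w V) {x y : V} (h : vv.v x ≠ vv.v y) :
    vv.v (x + y) = min (vv.v x) (vv.v y) := by
  rcases h.lt_or_gt with h1 | h1
  · rw [add_comm, vv.ueq h1, min_eq_left h1.le]
  · rw [vv.ueq h1, min_eq_right h1.le]

/-- if `v (p + q) < v p` then `v q = v (p + q)` -/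
lemma ueq2 (vv : ModVal w V) {p q : V} (h : vv.v (p + q) < vv.v p) :
    vv.v q = vv.v (p + q) := by
  apply le_antisymm
  · by_contra hcon
    push_neg at hcon
    have h1 := vv.hadd p q
    exact absurd h1 (not_le.mpr (lt_min h hcon))
  · have h1 := vv.hsub (p + q) p
    rw [add_sub_cancel_left] at h1
    rwa [min_eq_left h.le] at h1

lemma le_sum (vv : ModVal w V) {ι : Type*} (s : Finset ι) (g : ι → V) (B : EReal)
    (hB : ∀ i ∈ s, B ≤ vv.v (g i)) : B ≤ vv.v (∑ i ∈ s, g i) := by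
  induction s using Finset.cons_induction with
  | empty => rw [Finset.sum_empty, vv.hzero]; exact le_top
  | cons a s ha ih =>
    rw [Finset.sum_cons]
    refine le_trans (le_min (hB a (Finset.mem_cons_self a s)) ?_) (vv.hadd _ _)
    exact ih fun i hi => hB i (Finset.mem_cons_of_mem hi)

lemma le_sum' (vv : ModVal w V) {ι : Type*} [Fintype ι] (a : ι → K) (e : ι → V) :
    (⨅ i, (w.v (a i) + vv.v (e i))) ≤ vv.v (∑ i, a i • e i) := by
  apply vv.le_sum
  intro i _
  rw [vv.hsmul]
  exact iInf_le (fun i => w.v (a i) + vv.v (e i)) i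

def comap (vv : ModVal w V) (W : Submodule K V) : ModVal w W where
  v x := vv.v x
  hadd x y := by simpa using vv.hadd x y
  hsmul c x := by simpa using vv.hsmul c x
  htop x := by
    show vv.v (x : V) = ⊤ ↔ x = 0
    rw [vv.htop, ZeroMemClass.coe_eq_zero]

end ModVal
namespace ModVal

variable {K : Type u} [Field K] {w : FieldVal K}
variable {V : Type v} [AddCommGroup V] [Module K V]

/-- Distances to a diagonalized subspace are bounded above (uses completeness of `K`). -/
lemma dist_bdd (vv : ModVal w V) {m : ℕ} (e : Fin m → V)
    (hdiag : ∀ a : Fin m → K, vv.v (∑ i, a i • e i) = ⨅ i, (w.v (a i) + vv.v (e i)))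
    (he : ∀ i, e i ≠ 0) (x : V) (hx : x ∉ span K (Set.range e)) :
    ∃ M : ℝ, ∀ a : Fin m → K, vv.v (x - ∑ i, a i • e i) ≤ (M : EReal) := by
  by_contra hb
  push_neg at hb
  choose A hA using fun k : ℕ => hb (k : ℝ)
  set S : ℕ → V := fun k => ∑ i, A k i • e i with hS
  choose t ht using fun i => vv.real (he i)
  have hsub : ∀ p q : ℕ, S p - S q = ∑ j, (A p j - A q j) • e j := by
    intro p q
    rw [← Finset.sum_sub_distrib]
    exact Finset.sum_congr rfl fun j _ => (sub_smul _ _ _).symm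
  have hdiff : ∀ p q : ℕ, ∀ i, (((min p q : ℕ) : ℝ) : EReal) ≤ w.v (A p i - A q i) + (t i : EReal) := by
    intro p q i
    have h2 : (((min p q : ℕ) : ℝ) : EReal) ≤ vv.v (S p - S q) := by
      have heq : S p - S q = (x - S q) - (x - S p) := by abel
      rw [heq]
      refine le_trans (le_min ?_ ?_) (vv.hsub _ _)
      · exact le_trans (EReal.coe_le_coe_iff.mpr (by exact_mod_cast min_le_right p q)) (hA q).le
      · exact le_trans (EReal.coe_le_coe_iff.mpr (by exact_mod_cast min_le_left p q)) (hA p).le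
    have h3 : vv.v (S p - S q) = ⨅ j, (w.v (A p j - A q j) + vv.v (e j)) := by
      rw [hsub p q]; exact hdiag _
    rw [h3] at h2
    refine le_trans h2 ?_
    rw [← ht i]
    exact iInf_le _ i
  have hcau : ∀ i, ∃ l, ∀ M : ℝ, ∃ N, ∀ n ≥ N, (M : EReal) ≤ w.v (A n i - l) := by
    intro i
    apply w.hcompl
    intro M
    refine ⟨⌈M + t i⌉₊, fun p hp q hq => ?_⟩
    have h1 := hdiff p q i
    have h2 : (M + t i : ℝ) ≤ ((min p q : ℕ) : ℝ) := by
      refine le_trans (Nat.le_ceil _) ?_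
      exact_mod_cast le_min hp hq
    have h3 : ((M + t i : ℝ) : EReal) ≤ w.v (A p i - A q i) + (t i : EReal) :=
      le_trans (EReal.coe_le_coe_iff.mpr h2) h1
    rw [EReal.coe_add] at h3
    exact ereal_le_cancel_right h3
  choose L hL using hcau
  set wl : V := ∑ i, L i • e i with hwl
  have hmem : wl ∈ span K (Set.range e) :=
    (mem_span_range_iff_exists_fun K).mpr ⟨L, rfl⟩
  have htopv : vv.v (x - wl) = ⊤ := by
    apply ereal_eq_top_of_forall
    intro M
    choose N0 hN0 using fun i => hL i (M - t i)
    set N : ℕ := max ⌈M⌉₊ (Finset.univ.sup N0) with hN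
    have h1 : (M : EReal) ≤ vv.v (x - S N) := by
      refine le_trans ?_ (hA N).le
      refine EReal.coe_le_coe_iff.mpr ?_
      calc M ≤ (⌈M⌉₊ : ℝ) := Nat.le_ceil M
        _ ≤ (N : ℝ) := by exact_mod_cast le_max_left _ _
    have h2 : (M : EReal) ≤ vv.v (S N - wl) := by
      have heq : S N - wl = ∑ i, (A N i - L i) • e i := by
        rw [← Finset.sum_sub_distrib]
        exact Finset.sum_congr rfl fun j _ => (sub_smul _ _ _).symm
      rw [heq, hdiag]
      refine le_iInf fun i => ?_
      have hNi : N0 i ≤ N :=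
        le_trans (Finset.le_sup (Finset.mem_univ i)) (le_max_right _ _)
      have h4 := hN0 i N hNi
      calc (M : EReal) = ((M - t i : ℝ) : EReal) + (t i : EReal) := by
            rw [← EReal.coe_add]; norm_num
        _ ≤ w.v (A N i - L i) + (t i : EReal) := add_le_add_left h4 _
        _ = w.v (A N i - L i) + vv.v (e i) := by rw [ht i]
    calc (M : EReal) ≤ min (vv.v (x - S N)) (vv.v (S N - wl)) := le_min h1 h2
      _ ≤ vv.v ((x - S N) + (S N - wl)) := vv.hadd _ _
      _ = vv.v (x - wl) := by rw [sub_add_sub_cancel]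
  have : x - wl = 0 := (vv.htop _).1 htopv
  rw [sub_eq_zero] at this
  exact hx (this ▸ hmem)

/-- Every nonzero value of a diagonalized valuation lies in one of finitely many cosets. -/
lemma val_mem_coset (vv : ModVal w V) {m : ℕ} (e : Fin m → V)
    (hdiag : ∀ a : Fin m → K, vv.v (∑ i, a i • e i) = ⨅ i, (w.v (a i) + vv.v (e i)))
    (a : Fin m → K) {r : ℝ} (hr : vv.v (∑ i, a i • e i) = (r : EReal)) :
    ∃ i, ∃ k : ℤ, r = (vv.v (e i)).toReal + k * w.c := by
  cases isEmpty_or_nonempty (Fin m) with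
  | inl h =>
    exfalso
    have : (∑ i, a i • e i) = 0 := by simp
    rw [this, vv.hzero] at hr
    exact EReal.coe_ne_top r hr.symm
  | inr h =>
    rw [hdiag] at hr
    obtain ⟨i₀, hi₀⟩ := exists_iInf_eq (fun i => w.v (a i) + vv.v (e i))
    rw [hi₀] at hr
    have ha0 : a i₀ ≠ 0 := by
      intro h0
      rw [h0, w.hzero, EReal.top_add_of_ne_bot (vv.nebot _)] at hr
      exact EReal.coe_ne_top r hr.symm
    have he0 : e i₀ ≠ 0 := by
      intro h0
      rw [h0, (vv.htop 0).2 rfl, EReal.add_top_of_ne_bot (w.hbot _)] at hr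
      exact EReal.coe_ne_top r hr.symm
    obtain ⟨k, hk⟩ := w.hdisc _ ha0
    obtain ⟨s, hs⟩ := vv.real he0
    rw [hk, hs, ← EReal.coe_add] at hr
    refine ⟨i₀, k, ?_⟩
    have := EReal.coe_eq_coe_iff.mp hr
    rw [hs, EReal.toReal_coe]
    linarith

/-- The distance to a diagonalized subspace is attained. -/
lemma dist_max (vv : ModVal w V) {m : ℕ} (e : Fin m → V)
    (hdiag : ∀ a : Fin m → K, vv.v (∑ i, a i • e i) = ⨅ i, (w.v (a i) + vv.v (e i)))
    (he : ∀ i, e i ≠ 0) (x : V) (hx : x ∉ span K (Set.range e)) :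
    ∃ a₀ : Fin m → K, ∀ a : Fin m → K,
      vv.v (x - ∑ i, a i • e i) ≤ vv.v (x - ∑ i, a₀ i • e i) := by
  have hne0 : ∀ a : Fin m → K, x - (∑ i, a i • e i) ≠ 0 := by
    intro a h
    rw [sub_eq_zero] at h
    exact hx (h ▸ (mem_span_range_iff_exists_fun K).mpr ⟨a, rfl⟩)
  choose ρ hρ using fun a : Fin m → K => vv.real (hne0 a)
  set S : Set ℝ := Set.range ρ with hSdef
  obtain ⟨M, hM⟩ := vv.dist_bdd e hdiag he x hx
  have hbdd : BddAbove S := by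
    refine ⟨M, ?_⟩
    rintro r ⟨a, rfl⟩
    have := hM a
    rw [hρ a] at this
    exact EReal.coe_le_coe_iff.mp this
  have hcoset : ∀ r ∈ S, (∃ r' ∈ S, r < r') →
      ∃ i, ∃ k : ℤ, r = (vv.v (e i)).toReal + k * w.c := by
    rintro r ⟨a, rfl⟩ ⟨r', ⟨a', rfl⟩, hlt⟩
    have hsum : (x - ∑ i, a i • e i)
        = (x - ∑ i, a' i • e i) + ∑ i, (a' i - a i) • e i := by
      have : (∑ i, (a' i - a i) • e i) = (∑ i, a' i • e i) - ∑ i, a i • e i := by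
        rw [← Finset.sum_sub_distrib]
        exact Finset.sum_congr rfl fun j _ => (sub_smul _ _ _)
      rw [this]; abel
    have hkey : vv.v (∑ i, (a' i - a i) • e i) = ((ρ a : ℝ) : EReal) := by
      have hlt2 : vv.v ((x - ∑ i, a' i • e i) + ∑ i, (a' i - a i) • e i)
          < vv.v (x - ∑ i, a' i • e i) := by
        rw [← hsum, hρ a, hρ a']
        exact_mod_cast hlt
      have := vv.ueq2 hlt2
      rw [this, ← hsum, hρ a]
    exact vv.val_mem_coset e hdiag _ hkey
  obtain ⟨r₀, hr₀S, hmax⟩ := disc_max w.hc (fun i => (vv.v (e i)).toReal) S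
    ⟨ρ 0, 0, rfl⟩ hbdd hcoset
  obtain ⟨a₀, rfl⟩ := hr₀S
  refine ⟨a₀, fun a => ?_⟩
  rw [hρ a, hρ a₀]
  exact EReal.coe_le_coe_iff.mpr (hmax (ρ a) ⟨a, rfl⟩)

end ModVal
namespace ModVal

variable {K : Type u} [Field K] {w : FieldVal K}
variable {V : Type v} [AddCommGroup V] [Module K V]

/-- If `y` realizes the maximal distance to `W`, then `W` is orthogonal to `y`. -/
lemma orth_ext (vv : ModVal w V) (W : Submodule K V) (y : V) (hy : y ≠ 0)
    (hmax : ∀ u ∈ W, vv.v (y + u) ≤ vv.v y) :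
    ∀ (A : K), ∀ u ∈ W, vv.v (A • y + u) = min (w.v A + vv.v y) (vv.v u) := by
  intro A u hu
  rcases eq_or_ne A 0 with rfl | hA
  · rw [zero_smul, zero_add, w.hzero, EReal.top_add_of_ne_bot (vv.nebot y),
      min_eq_right le_top]
  · have h1 : vv.v (A • y + u) ≤ w.v A + vv.v y := by
      have heq : A • y + u = A • (y + A⁻¹ • u) := by
        rw [smul_add, smul_smul, mul_inv_cancel₀ hA, one_smul]
      rw [heq, vv.hsmul]
      exact add_le_add_right (hmax _ (W.smul_mem _ hu)) _
    have h2 : min (w.v A + vv.v y) (vv.v u) ≤ vv.v (A • y + u) := by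
      have := vv.hadd (A • y) u
      rwa [vv.hsmul] at this
    rcases lt_trichotomy (vv.v u) (w.v A + vv.v y) with hlt | heq | hgt
    · have hne : vv.v u < vv.v (A • y) := by rwa [vv.hsmul]
      rw [vv.ueq hne, min_eq_right hlt.le]
    · rw [min_eq_left heq.ge] at h2 ⊢
      exact le_antisymm h1 h2
    · have hne : vv.v (A • y) < vv.v u := by rwa [vv.hsmul]
      have h3 := vv.ueq (x := u) (y := A • y) hne
      rw [add_comm] at h3
      rw [h3, vv.hsmul, min_eq_left hgt.le]

/-- If `i₀` realizes the minimum in the diagonal expansion of `x₀`, then the span of the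
other basis vectors is orthogonal to `x₀`. -/
lemma orth_argmin (vv : ModVal w V) {m : ℕ} (e : Basis (Fin (m + 1)) K V)
    (hdiag : ∀ a : Fin (m + 1) → K, vv.v (∑ i, a i • e i) = ⨅ i, (w.v (a i) + vv.v (e i)))
    (x₀ : V) (i₀ : Fin (m + 1))
    (hval : vv.v x₀ = w.v (e.repr x₀ i₀) + vv.v (e i₀))
    (hmin : ∀ i, vv.v x₀ ≤ w.v (e.repr x₀ i) + vv.v (e i)) :
    ∀ (A : K), ∀ u ∈ span K (Set.range (fun j => e (i₀.succAbove j))),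
      vv.v (A • x₀ + u) = min (w.v A + vv.v x₀) (vv.v u) := by
  intro A u hu
  rw [mem_span_range_iff_exists_fun] at hu
  obtain ⟨aa, rfl⟩ := hu
  set c : Fin (m + 1) → K := fun i => e.repr x₀ i with hc
  set b : Fin (m + 1) → K := i₀.insertNth 0 aa with hb
  have hb0 : b i₀ = 0 := by rw [hb]; exact Fin.insertNth_apply_same (α := fun _ => K) i₀ 0 aa
  have hbs : ∀ j, b (i₀.succAbove j) = aa j := fun j => by
    rw [hb]; exact Fin.insertNth_apply_succAbove (α := fun _ => K) i₀ 0 aa j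
  have hu_eq : (∑ j, aa j • e (i₀.succAbove j)) = ∑ i, b i • e i := by
    rw [Fin.sum_univ_succAbove (fun i => b i • e i) i₀, hb0, zero_smul, zero_add]
    exact Finset.sum_congr rfl fun j _ => by rw [hbs j]
  have hx₀ : x₀ = ∑ i, c i • e i := (e.sum_repr x₀).symm
  have hsum : A • x₀ + (∑ j, aa j • e (i₀.succAbove j)) = ∑ i, (A * c i + b i) • e i := by
    rw [hu_eq]
    nth_rewrite 1 [hx₀]
    rw [Finset.smul_sum, ← Finset.sum_add_distrib]
    exact Finset.sum_congr rfl fun i _ => by rw [add_smul, smul_smul]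
  have hu_v : vv.v (∑ j, aa j • e (i₀.succAbove j)) = ⨅ i, (w.v (b i) + vv.v (e i)) := by
    rw [hu_eq, hdiag]
  rw [hsum, hdiag, hu_v]
  have hb1 : (⨅ i, (w.v (A * c i + b i) + vv.v (e i))) ≤ w.v A + vv.v x₀ := by
    refine le_trans (iInf_le _ i₀) ?_
    rw [hb0, add_zero, w.hmul, add_assoc, ← hval]
  have hterm : ∀ i, w.v A + vv.v x₀ ≤ w.v (A * c i) + vv.v (e i) := by
    intro i
    rw [w.hmul, add_assoc]
    exact add_le_add_right (hmin i) _
  apply le_antisymm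
  · apply le_min hb1
    refine le_iInf fun i => ?_
    rcases le_or_gt (w.v A + vv.v x₀) (w.v (b i) + vv.v (e i)) with hle | hlt
    · exact le_trans hb1 hle
    · have h3 : w.v (b i) + vv.v (e i) < w.v (A * c i) + vv.v (e i) :=
        lt_of_lt_of_le hlt (hterm i)
      obtain ⟨r, hr⟩ := vv.real (e.ne_zero i)
      rw [hr] at h3
      have h4 : w.v (b i) < w.v (A * c i) := ereal_lt_cancel_right h3
      have h5 : w.v (A * c i + b i) = w.v (b i) := w.ueq h4
      refine le_trans (iInf_le _ i) ?_
      rw [h5]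
  · refine le_iInf fun i => ?_
    refine le_trans (min_le_min (hterm i) (iInf_le _ i)) ?_
    rw [ereal_min_add_right]
    exact add_le_add_left (w.hadd _ _) _

/-- Transfer orthogonality from `vv` to `vv'` when `x₀` maximizes `v' - v`. -/
lemma orth_transfer (vv vv' : ModVal w V) (W : Submodule K V) (x₀ : V) (hx₀ : x₀ ∉ W)
    (horth : ∀ (A : K), ∀ u ∈ W, vv.v (A • x₀ + u) = min (w.v A + vv.v x₀) (vv.v u))
    (hmax : ∀ y : V, y ≠ 0 →
      (vv'.v y).toReal - (vv.v y).toReal ≤ (vv'.v x₀).toReal - (vv.v x₀).toReal) :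
    ∀ (A : K), ∀ u ∈ W, vv'.v (A • x₀ + u) = min (w.v A + vv'.v x₀) (vv'.v u) := by
  intro A u hu
  have hx0 : x₀ ≠ 0 := fun h => hx₀ (h ▸ W.zero_mem)
  rcases eq_or_ne A 0 with rfl | hA
  · rw [zero_smul, zero_add, w.hzero, EReal.top_add_of_ne_bot (vv'.nebot x₀),
      min_eq_right le_top]
  rcases eq_or_ne u 0 with rfl | hu0
  · rw [add_zero, vv'.hsmul, vv'.hzero, min_eq_left le_top]
  have hy0 : A • x₀ + u ≠ 0 := by
    intro h
    apply hx₀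
    have h1 : A • x₀ = -u := by
      rw [← sub_eq_zero]; rw [sub_neg_eq_add]; exact h
    have h2 : x₀ = A⁻¹ • (-u) := by
      rw [← h1, smul_smul, inv_mul_cancel₀ hA, one_smul]
    rw [h2]
    exact W.smul_mem _ (W.neg_mem hu)
  have hge : min (w.v A + vv'.v x₀) (vv'.v u) ≤ vv'.v (A • x₀ + u) := by
    have := vv'.hadd (A • x₀) u
    rwa [vv'.hsmul] at this
  rcases eq_or_lt_of_le hge with heq | hlt
  · exact heq.symm
  exfalso
  have hAx : vv'.v (A • x₀) = w.v A + vv'.v x₀ := vv'.hsmul A x₀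
  have hmm : vv'.v (A • x₀) = vv'.v u := by
    by_contra hne
    have := vv'.umin hne
    rw [hAx] at this
    rw [← this] at hlt
    exact lt_irrefl _ hlt
  have hlt2 : w.v A + vv'.v x₀ < vv'.v (A • x₀ + u) := by
    refine lt_of_le_of_lt ?_ hlt
    rw [← hAx, hmm, min_self]
  have hvy : vv.v (A • x₀ + u) ≤ w.v A + vv.v x₀ := by
    rw [horth A u hu]
    exact min_le_left _ _
  obtain ⟨α, hα⟩ := w.real hA
  obtain ⟨p1, hp1⟩ := vv.real hx0
  obtain ⟨q1, hq1⟩ := vv'.real hx0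
  obtain ⟨p2, hp2⟩ := vv.real hy0
  obtain ⟨q2, hq2⟩ := vv'.real hy0
  rw [hα, hq1, hq2, ← EReal.coe_add] at hlt2
  have h1 : α + q1 < q2 := EReal.coe_lt_coe_iff.mp hlt2
  rw [hα, hp1, hp2, ← EReal.coe_add] at hvy
  have h2 : p2 ≤ α + p1 := EReal.coe_le_coe_iff.mp hvy
  have h3 := hmax _ hy0
  rw [hp1, hq1, hp2, hq2, EReal.toReal_coe, EReal.toReal_coe, EReal.toReal_coe,
    EReal.toReal_coe] at h3
  linarith

/-- Assembling a diagonalizing family from an orthogonal vector and a diagonalized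
submodule basis. -/
lemma diag_cons (vv : ModVal w V) {n : ℕ} (x₀ : V) (W : Submodule K V)
    (bw : Basis (Fin n) K W)
    (hdw : ∀ a : Fin n → K,
      vv.v (∑ j, a j • (bw j : V)) = ⨅ j, (w.v (a j) + vv.v ((bw j : V))))
    (horth : ∀ (A : K), ∀ u ∈ W, vv.v (A • x₀ + u) = min (w.v A + vv.v x₀) (vv.v u)) :
    ∀ a : Fin (n + 1) → K,
      vv.v (∑ i, a i • (Fin.cons (α := fun _ => V) x₀ (fun j => ((bw j : V)))) i)
        = ⨅ i, (w.v (a i) + vv.v (Fin.cons (α := fun _ => V) x₀ (fun j => ((bw j : V))) i)) := by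
  intro a
  rw [Fin.sum_univ_succ]
  simp only [Fin.cons_zero, Fin.cons_succ]
  have hwmem : (∑ j, a j.succ • (bw j : V)) ∈ W := by
    refine Submodule.sum_mem _ fun j _ => W.smul_mem _ ?_
    exact SetLike.coe_mem (bw j)
  rw [horth (a 0) _ hwmem, hdw (fun j => a j.succ),
    iInf_fin_succ (fun i => w.v (a i) +
      vv.v ((Fin.cons (α := fun _ => V) x₀ (fun j => ((bw j : V)))) i))]
  simp only [Fin.cons_zero, Fin.cons_succ]

end ModVal
/-! ### Diagonalization of a single valuation -/

theorem exists_diag {K : Type u} [Field K] (w : FieldVal K) (n : ℕ) :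
    ∀ (V : Type v) [AddCommGroup V] [Module K V] [FiniteDimensional K V]
      (vv : ModVal w V), Module.finrank K V = n →
      ∃ b : Basis (Fin n) K V,
        ∀ a : Fin n → K, vv.v (∑ i, a i • b i) = ⨅ i, (w.v (a i) + vv.v (b i)) := by
  induction n with
  | zero =>
    intro V _ _ _ vv h
    haveI : Subsingleton V := Module.finrank_zero_iff.mp h
    refine ⟨Basis.empty V, fun a => ?_⟩
    have h0 : (∑ i : Fin 0, a i • (Basis.empty V : Basis (Fin 0) K V) i) = 0 := by simp
    rw [h0, vv.hzero, iInf_of_empty]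
  | succ n ih =>
    intro V _ _ _ vv h
    set b0 : Basis (Fin (n + 1)) K V := Module.finBasisOfFinrankEq K V h with hb0def
    set W : Submodule K V := span K (Set.range (fun j : Fin n => b0 j.castSucc)) with hWdef
    have hli : LinearIndependent K (fun j : Fin n => b0 j.castSucc) :=
      b0.linearIndependent.comp Fin.castSucc (Fin.castSucc_injective n)
    have hWrank : Module.finrank K W = n := by
      rw [hWdef, finrank_span_eq_card hli, Fintype.card_fin]
    have hxW : b0 (Fin.last n) ∉ W := by
      have h1 : Set.range (fun j : Fin n => b0 j.castSucc)
          = b0 '' (Set.range (Fin.castSucc)) := by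
        rw [← Set.range_comp]; rfl
      rw [hWdef, h1]
      apply b0.linearIndependent.notMem_span_image
      rintro ⟨j, hj⟩
      exact absurd hj (Fin.castSucc_lt_last j).ne
    obtain ⟨bw, hbw⟩ := ih W (vv.comap W) hWrank
    have hdw : ∀ a : Fin n → K,
        vv.v (∑ j, a j • (bw j : V)) = ⨅ j, (w.v (a j) + vv.v ((bw j : V))) := by
      intro a
      have h2 : ((∑ j, a j • bw j : W) : V) = ∑ j, a j • (bw j : V) := by
        push_cast; rfl
      rw [← h2]
      exact hbw a
    have hspan : span K (Set.range (fun j => (bw j : V))) = W := by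
      have h1 : Set.range (fun j => (bw j : V)) = (W.subtype) '' (Set.range bw) := by
        rw [← Set.range_comp]; rfl
      rw [h1, Submodule.span_image, Basis.span_eq, Submodule.map_subtype_top]
    have hew0 : ∀ j, (bw j : V) ≠ 0 := fun j hj =>
      bw.ne_zero j (ZeroMemClass.coe_eq_zero.mp hj)
    set x : V := b0 (Fin.last n) with hxdef
    have hx : x ∉ span K (Set.range (fun j => (bw j : V))) := by rw [hspan]; exact hxW
    obtain ⟨a₀, ha₀⟩ := vv.dist_max (fun j => (bw j : V)) hdw hew0 x hx
    set y : V := x - ∑ i, a₀ i • (bw i : V) with hydef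
    have hsmem : (∑ i, a₀ i • (bw i : V)) ∈ W := by
      have hh : (∑ i, a₀ i • (bw i : V)) ∈ span K (Set.range (fun j => (bw j : V))) :=
        (mem_span_range_iff_exists_fun K).mpr ⟨a₀, rfl⟩
      rwa [hspan] at hh
    have hyW : y ∉ W := by
      intro hy
      apply hxW
      have hxy : x = y + ∑ i, a₀ i • (bw i : V) := by rw [hydef]; abel
      rw [hxy]
      exact W.add_mem hy hsmem
    have hy0 : y ≠ 0 := fun h0 => hyW (h0 ▸ W.zero_mem)
    have hmax : ∀ u ∈ W, vv.v (y + u) ≤ vv.v y := by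
      intro u hu
      rw [← hspan, mem_span_range_iff_exists_fun] at hu
      obtain ⟨b, rfl⟩ := hu
      have heq : y + (∑ i, b i • (bw i : V)) = x - ∑ i, (a₀ i - b i) • (bw i : V) := by
        rw [hydef]
        rw [show (∑ i, (a₀ i - b i) • (bw i : V))
            = (∑ i, a₀ i • (bw i : V)) - ∑ i, b i • (bw i : V) by
          rw [← Finset.sum_sub_distrib]
          exact Finset.sum_congr rfl fun j _ => sub_smul _ _ _]
        abel
      rw [heq]
      exact ha₀ _
    have horth := vv.orth_ext W y hy0 hmax
    have htot : W ⊔ (K ∙ y) = ⊤ := by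
      rw [eq_top_iff, ← b0.span_eq, span_le]
      rintro _ ⟨i, rfl⟩
      induction i using Fin.lastCases with
      | last =>
        have hxy : b0 (Fin.last n) = y + ∑ i, a₀ i • (bw i : V) := by
          rw [hydef, ← hxdef]; abel
        rw [hxy]
        exact Submodule.add_mem _
          (Submodule.mem_sup_right (Submodule.mem_span_singleton_self y))
          (Submodule.mem_sup_left hsmem)
      | cast j =>
        exact Submodule.mem_sup_left (subset_span ⟨j, rfl⟩)
    have hsp : ∀ z : V, ∃ cc : K, z + cc • y ∈ W := by
      intro z
      have hz : z ∈ W ⊔ (K ∙ y) := htot ▸ Submodule.mem_top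
      rw [Submodule.mem_sup] at hz
      obtain ⟨u, hu, t, ht, rfl⟩ := hz
      rw [Submodule.mem_span_singleton] at ht
      obtain ⟨cc, rfl⟩ := ht
      refine ⟨-cc, ?_⟩
      rw [add_assoc, neg_smul, add_neg_cancel, add_zero]
      exact hu
    have hli2 : ∀ (cc : K), ∀ u ∈ W, cc • y + u = 0 → cc = 0 := by
      intro cc u hu h0
      by_contra hcc
      apply hyW
      have h1 : cc • y = -u := by rw [← sub_eq_zero, sub_neg_eq_add]; exact h0
      have h2 : y = cc⁻¹ • (-u) := by rw [← h1, smul_smul, inv_mul_cancel₀ hcc, one_smul]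
      rw [h2]
      exact W.smul_mem _ (W.neg_mem hu)
    refine ⟨Basis.mkFinCons y bw hli2 hsp, ?_⟩
    intro a
    rw [Basis.coe_mkFinCons]
    exact vv.diag_cons y W bw hdw horth a
/-! ### Simultaneous diagonalization of two valuations -/

theorem exists_diag2 {K : Type u} [Field K] (w : FieldVal K) (n : ℕ) :
    ∀ (V : Type v) [AddCommGroup V] [Module K V] [FiniteDimensional K V]
      (vv vv' : ModVal w V), Module.finrank K V = n →
      ∃ b : Basis (Fin n) K V,
        (∀ a : Fin n → K, vv.v (∑ i, a i • b i) = ⨅ i, (w.v (a i) + vv.v (b i))) ∧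
        (∀ a : Fin n → K, vv'.v (∑ i, a i • b i) = ⨅ i, (w.v (a i) + vv'.v (b i))) := by
  induction n with
  | zero =>
    intro V _ _ _ vv vv' h
    haveI : Subsingleton V := Module.finrank_zero_iff.mp h
    refine ⟨Basis.empty V, fun a => ?_, fun a => ?_⟩
    · have h0 : (∑ i : Fin 0, a i • (Basis.empty V : Basis (Fin 0) K V) i) = 0 := by simp
      rw [h0, vv.hzero, iInf_of_empty]
    · have h0 : (∑ i : Fin 0, a i • (Basis.empty V : Basis (Fin 0) K V) i) = 0 := by simp
      rw [h0, vv'.hzero, iInf_of_empty]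
  | succ n ih =>
    intro V _ _ _ vv vv' h
    obtain ⟨e, he⟩ := exists_diag w (n + 1) V vv h
    obtain ⟨f, hf⟩ := exists_diag w (n + 1) V vv' h
    have hvx : ∀ x : V, vv.v x = ⨅ i, (w.v (e.repr x i) + vv.v (e i)) := by
      intro x
      conv_lhs => rw [← e.sum_repr x]
      exact he _
    have hvx' : ∀ x : V, vv'.v x = ⨅ i, (w.v (f.repr x i) + vv'.v (f i)) := by
      intro x
      conv_lhs => rw [← f.sum_repr x]
      exact hf _
    -- the quantity to maximize
    set M₀ : ℝ := Finset.univ.sup' Finset.univ_nonempty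
      (fun j : Fin (n + 1) => (vv'.v (f j)).toReal - (vv.v (f j)).toReal) with hM₀
    have hboundr : ∀ x : V, x ≠ 0 →
        (vv'.v x).toReal - (vv.v x).toReal ≤ M₀ := by
      intro x hx
      have h1 : (⨅ j, (w.v (f.repr x j) + vv.v (f j))) ≤ vv.v x := by
        conv_rhs => rw [← f.sum_repr x]
        exact vv.le_sum' _ _
      obtain ⟨j₁, hj₁⟩ := exists_iInf_eq (fun j => w.v (f.repr x j) + vv.v (f j))
      have hfj : ∀ j, vv'.v (f j) + ((-M₀ : ℝ) : EReal) ≤ vv.v (f j) := by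
        intro j
        obtain ⟨s1, hs1⟩ := vv'.real (f.ne_zero j)
        obtain ⟨s2, hs2⟩ := vv.real (f.ne_zero j)
        rw [hs1, hs2, ← EReal.coe_add, EReal.coe_le_coe_iff]
        have hsub := Finset.le_sup'
          (fun j : Fin (n + 1) => (vv'.v (f j)).toReal - (vv.v (f j)).toReal)
          (Finset.mem_univ j)
        rw [hs1, hs2, EReal.toReal_coe, EReal.toReal_coe] at hsub
        rw [← hM₀] at hsub
        linarith
      have h2 : vv'.v x + ((-M₀ : ℝ) : EReal) ≤ vv.v x := by
        calc vv'.v x + ((-M₀ : ℝ) : EReal)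
            ≤ (w.v (f.repr x j₁) + vv'.v (f j₁)) + ((-M₀ : ℝ) : EReal) := by
              refine add_le_add_left ?_ _
              rw [hvx' x]
              exact iInf_le _ j₁
          _ = w.v (f.repr x j₁) + (vv'.v (f j₁) + ((-M₀ : ℝ) : EReal)) := by
              rw [add_assoc]
          _ ≤ w.v (f.repr x j₁) + vv.v (f j₁) := add_le_add_right (hfj j₁) _
          _ = ⨅ j, (w.v (f.repr x j) + vv.v (f j)) := hj₁.symm
          _ ≤ vv.v x := h1
      obtain ⟨p, hp⟩ := vv.real hx
      obtain ⟨q, hq⟩ := vv'.real hx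
      rw [hp, hq, ← EReal.coe_add, EReal.coe_le_coe_iff] at h2
      rw [hp, hq, EReal.toReal_coe, EReal.toReal_coe]
      linarith
    set S : Set ℝ := (fun x : V => (vv'.v x).toReal - (vv.v x).toReal) '' {x : V | x ≠ 0}
      with hS
    have hSne : S.Nonempty := ⟨_, e 0, e.ne_zero 0, rfl⟩
    have hbdd : BddAbove S := by
      refine ⟨M₀, ?_⟩
      rintro r ⟨x, hx, rfl⟩
      exact hboundr x hx
    have hcoset : ∀ r ∈ S, (∃ r' ∈ S, r < r') →
        ∃ (ij : Fin (n + 1) × Fin (n + 1)) (k : ℤ),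
          r = ((vv'.v (f ij.2)).toReal - (vv.v (e ij.1)).toReal) + k * w.c := by
      rintro r ⟨x, hx, rfl⟩ -
      obtain ⟨p, hp⟩ := vv.real (show x ≠ 0 from hx)
      obtain ⟨q, hq⟩ := vv'.real (show x ≠ 0 from hx)
      obtain ⟨i, k, hik⟩ := vv.val_mem_coset e he (fun i => e.repr x i)
        (by rw [e.sum_repr]; exact hp)
      obtain ⟨j, k', hjk⟩ := vv'.val_mem_coset f hf (fun i => f.repr x i)
        (by rw [f.sum_repr]; exact hq)
      refine ⟨(i, j), k' - k, ?_⟩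
      show (vv'.v x).toReal - (vv.v x).toReal
        = ((vv'.v (f j)).toReal - (vv.v (e i)).toReal) + ((k' - k : ℤ) : ℝ) * w.c
      rw [hp, hq, EReal.toReal_coe, EReal.toReal_coe]
      push_cast
      linarith
    obtain ⟨r₀, hr₀S, hmaxS⟩ := disc_max w.hc
      (fun ij : Fin (n + 1) × Fin (n + 1) =>
        (vv'.v (f ij.2)).toReal - (vv.v (e ij.1)).toReal) S hSne hbdd hcoset
    obtain ⟨x₀, hx₀ne, rfl⟩ := hr₀S
    have hmax : ∀ y : V, y ≠ 0 →
        (vv'.v y).toReal - (vv.v y).toReal ≤ (vv'.v x₀).toReal - (vv.v x₀).toReal :=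
      fun y hy => hmaxS _ ⟨y, hy, rfl⟩
    -- the argmin coordinate of x₀
    obtain ⟨i₀, hi₀⟩ := exists_iInf_eq (fun i => w.v (e.repr x₀ i) + vv.v (e i))
    have hval : vv.v x₀ = w.v (e.repr x₀ i₀) + vv.v (e i₀) := by
      rw [hvx x₀]; exact hi₀
    have hmin : ∀ i, vv.v x₀ ≤ w.v (e.repr x₀ i) + vv.v (e i) := fun i => by
      rw [hvx x₀]; exact iInf_le _ i
    have hcc0 : e.repr x₀ i₀ ≠ 0 := by
      intro h0
      rw [h0, w.hzero, EReal.top_add_of_ne_bot (vv.nebot _)] at hval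
      exact (hx₀ne : x₀ ≠ 0) ((vv.htop x₀).1 hval)
    have horth := vv.orth_argmin e he x₀ i₀ hval hmin
    set W : Submodule K V := span K (Set.range (fun j => e (i₀.succAbove j))) with hWdef
    have hWrank : Module.finrank K W = n := by
      have hli3 : LinearIndependent K (fun j => e (i₀.succAbove j)) :=
        e.linearIndependent.comp _ (Fin.succAbove_right_injective (p := i₀))
      rw [hWdef, finrank_span_eq_card hli3, Fintype.card_fin]
    have hx₀W : x₀ ∉ W := by
      intro hmem
      have hker : W ≤ LinearMap.ker (e.coord i₀) := by
        rw [hWdef, span_le]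
        rintro _ ⟨j, rfl⟩
        simp only [SetLike.mem_coe, LinearMap.mem_ker, Basis.coord_apply, Basis.repr_self]
        exact Finsupp.single_eq_of_ne' (Fin.succAbove_ne i₀ j)
      have hk := hker hmem
      rw [LinearMap.mem_ker, Basis.coord_apply] at hk
      exact hcc0 hk
    have horth' := vv.orth_transfer vv' W x₀ hx₀W (fun A u hu => horth A u hu) hmax
    obtain ⟨bw, hbw, hbw'⟩ := ih W (vv.comap W) (vv'.comap W) hWrank
    have hdw : ∀ a : Fin n → K,
        vv.v (∑ j, a j • (bw j : V)) = ⨅ j, (w.v (a j) + vv.v ((bw j : V))) := by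
      intro a
      have h2 : ((∑ j, a j • bw j : W) : V) = ∑ j, a j • (bw j : V) := by push_cast; rfl
      rw [← h2]
      exact hbw a
    have hdw' : ∀ a : Fin n → K,
        vv'.v (∑ j, a j • (bw j : V)) = ⨅ j, (w.v (a j) + vv'.v ((bw j : V))) := by
      intro a
      have h2 : ((∑ j, a j • bw j : W) : V) = ∑ j, a j • (bw j : V) := by push_cast; rfl
      rw [← h2]
      exact hbw' a
    -- span of W and x₀ is everything
    have hx₀sum : x₀ = e.repr x₀ i₀ • e i₀
        + ∑ j, e.repr x₀ (i₀.succAbove j) • e (i₀.succAbove j) := by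
      conv_lhs => rw [← e.sum_repr x₀]
      exact Fin.sum_univ_succAbove (fun i => e.repr x₀ i • e i) i₀
    have hsmem2 : (∑ j, e.repr x₀ (i₀.succAbove j) • e (i₀.succAbove j)) ∈ W :=
      (mem_span_range_iff_exists_fun K).mpr ⟨fun j => e.repr x₀ (i₀.succAbove j), rfl⟩
    have htot : W ⊔ (K ∙ x₀) = ⊤ := by
      rw [eq_top_iff, ← e.span_eq, span_le]
      rintro _ ⟨i, rfl⟩
      rcases eq_or_ne i i₀ with rfl | hne
      · have hsub : e.repr x₀ i • e i = x₀
            - ∑ j, e.repr x₀ (i.succAbove j) • e (i.succAbove j) :=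
          eq_sub_of_add_eq hx₀sum.symm
        have hmem2 : e.repr x₀ i • e i ∈ W ⊔ (K ∙ x₀) := by
          rw [hsub]
          exact Submodule.sub_mem _
            (Submodule.mem_sup_right (Submodule.mem_span_singleton_self x₀))
            (Submodule.mem_sup_left hsmem2)
        exact ((W ⊔ (K ∙ x₀)).smul_mem_iff hcc0).mp hmem2
      · obtain ⟨j, rfl⟩ := Fin.exists_succAbove_eq hne
        exact Submodule.mem_sup_left (subset_span ⟨j, rfl⟩)
    have hsp : ∀ z : V, ∃ cc : K, z + cc • x₀ ∈ W := by
      intro z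
      have hz : z ∈ W ⊔ (K ∙ x₀) := htot ▸ Submodule.mem_top
      rw [Submodule.mem_sup] at hz
      obtain ⟨u, hu, t, ht, rfl⟩ := hz
      rw [Submodule.mem_span_singleton] at ht
      obtain ⟨cc, rfl⟩ := ht
      refine ⟨-cc, ?_⟩
      rw [add_assoc, neg_smul, add_neg_cancel, add_zero]
      exact hu
    have hli2 : ∀ (cc : K), ∀ u ∈ W, cc • x₀ + u = 0 → cc = 0 := by
      intro cc u hu h0
      by_contra hcc
      apply hx₀W
      have h1 : cc • x₀ = -u := by rw [← sub_eq_zero, sub_neg_eq_add]; exact h0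
      have h2 : x₀ = cc⁻¹ • (-u) := by rw [← h1, smul_smul, inv_mul_cancel₀ hcc, one_smul]
      rw [h2]
      exact W.smul_mem _ (W.neg_mem hu)
    refine ⟨Basis.mkFinCons x₀ bw hli2 hsp, fun a => ?_, fun a => ?_⟩
    · rw [Basis.coe_mkFinCons]
      exact vv.diag_cons x₀ W bw hdw (fun A u hu => horth A u hu) a
    · rw [Basis.coe_mkFinCons]
      exact vv'.diag_cons x₀ W bw hdw' horth' a
/-- Proposition 3.2 of the paper: over a field `K` complete with respect to a nontrivial
discrete additive valuation `vK` (values in `ℝ ∪ {∞}`, encoded in `EReal`), any two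
`vK`-valuations `v, v'` on a finite-dimensional `K`-vector space `V` can be simultaneously
diagonalized by a basis of `V`. -/
theorem stmt7 {K V : Type*} [Field K] [AddCommGroup V] [Module K V] [FiniteDimensional K V]
    (vK : K → EReal)
    (htop : ∀ a : K, vK a = ⊤ ↔ a = 0)
    (hbot : ∀ a : K, vK a ≠ ⊥)
    (hmul : ∀ a b : K, vK (a * b) = vK a + vK b)
    (hadd : ∀ a b : K, min (vK a) (vK b) ≤ vK (a + b))
    -- the value group is contained in a discrete subgroup `c·ℤ` of `ℝ` ...
    (hdisc : ∃ c : ℝ, 0 < c ∧ ∀ a : K, a ≠ 0 → ∃ k : ℤ, vK a = (((k : ℝ) * c : ℝ) : EReal))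
    -- ... and is nonzero
    (hnontriv : ∃ a : K, a ≠ 0 ∧ vK a ≠ 0)
    -- `K` is complete with respect to `vK`
    (hcomplete : ∀ a : ℕ → K,
      (∀ M : ℝ, ∃ N : ℕ, ∀ m ≥ N, ∀ n ≥ N, (M : EReal) ≤ vK (a m - a n)) →
      ∃ l : K, ∀ M : ℝ, ∃ N : ℕ, ∀ n ≥ N, (M : EReal) ≤ vK (a n - l))
    (v v' : V → EReal)
    (hv1 : ∀ x y : V, min (v x) (v y) ≤ v (x + y))
    (hv2 : ∀ (c : K) (x : V), v (c • x) = vK c + v x)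
    (hv3 : ∀ x : V, v x = ⊤ ↔ x = 0)
    (hv'1 : ∀ x y : V, min (v' x) (v' y) ≤ v' (x + y))
    (hv'2 : ∀ (c : K) (x : V), v' (c • x) = vK c + v' x)
    (hv'3 : ∀ x : V, v' x = ⊤ ↔ x = 0) :
    ∃ b : Basis (Fin (Module.finrank K V)) K V,
      (∀ a : Fin (Module.finrank K V) → K,
        v (∑ i, a i • b i) = ⨅ i, (vK (a i) + v (b i))) ∧
      (∀ a : Fin (Module.finrank K V) → K,
        v' (∑ i, a i • b i) = ⨅ i, (vK (a i) + v' (b i))) := by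
  obtain ⟨c, hc, hd⟩ := hdisc
  let w : FieldVal K := ⟨vK, htop, hbot, hmul, hadd, c, hc, hd, hcomplete⟩
  let vv : ModVal w V := ⟨v, hv1, hv2, hv3⟩
  let vv' : ModVal w V := ⟨v', hv'1, hv'2, hv'3⟩
  obtain ⟨b, h1, h2⟩ := exists_diag2 w (Module.finrank K V) V vv vv' rfl
  exact ⟨b, h1, h2⟩
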